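/- Let E be a real inner product space, let w ∈ E with w ≠ 0, and let h_*, h^* ∈ ℝ with h_* ≤ h^*. Set K := {z ∈ E : h_* ≤ ⟪w, z⟫ ≤ h^*}. If v ∈ K and u ∈ E satisfy ⟪u, v − z⟫ ≥ 0 for every z ∈ K, then there exists λ ∈ ℝ such that u = λ • w. (Every element of the normal cone to the slab K is a scalar multiple of the weight w.) -/

import Mathlib

open scoped RealInnerProductSpace

/-- Every element of the normal cone to the slab
`K = {z | h_* ≤ ⟪w, z⟫ ≤ h^*}` at a point `v ∈ K` is a scalar multiple of `w`. -/
theorem normal_cone_slab_is_multiple_of_weight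
    {E : Type*} [NormedAddCommGroup E] [InnerProductSpace ℝ E]
    (w : E) (hw : w ≠ 0) (hstar hstar' : ℝ) (hle : hstar ≤ hstar')
    (K : Set E) (hK : K = {z : E | hstar ≤ ⟪w, z⟫ ∧ ⟪w, z⟫ ≤ hstar'})
    (v : E) (hv : v ∈ K) (u : E)
    (hu : ∀ z ∈ K, 0 ≤ ⟪u, v - z⟫) :
    ∃ l : ℝ, u = l • w := by
  subst hK
  set c : ℝ := ⟪w, u⟫ / ‖w‖ ^ 2 with hc
  set p : E := u - c • w with hp
  have hwp : ⟪w, p⟫ = 0 := by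
    have hw2 : ‖w‖ ^ 2 ≠ 0 := by
      simpa using pow_ne_zero 2 (norm_ne_zero_iff.mpr hw)
    simp [hp, hc, inner_sub_right, inner_smul_right, real_inner_self_eq_norm_sq,
      div_mul_cancel₀ _ hw2]
  have key : ∀ t : ℝ, 0 ≤ t * ⟪u, p⟫ := by
    intro t
    have hz : v - t • p ∈ {z : E | hstar ≤ ⟪w, z⟫ ∧ ⟪w, z⟫ ≤ hstar'} := by
      have : ⟪w, v - t • p⟫ = ⟪w, v⟫ := by
        simp [inner_sub_right, inner_smul_right, hwp]
      refine ⟨?_, ?_⟩ <;> simp only [Set.mem_setOf_eq, this]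
      · exact hv.1
      · exact hv.2
    have := hu _ hz
    simpa [inner_smul_right] using this
  have hup : ⟪u, p⟫ = 0 := by
    have h1 := key 1
    have h2 := key (-1)
    nlinarith
  have hpp : ⟪p, p⟫ = 0 := by
    have : ⟪p, p⟫ = ⟪u, p⟫ - c * ⟪w, p⟫ := by
      simp only [hp, inner_sub_left, real_inner_smul_left]
    rw [this, hup, hwp]; ring
  have hp0 : p = 0 := by
    have := inner_self_eq_zero (𝕜 := ℝ) (x := p)
    exact this.mp hpp
  refine ⟨c, ?_⟩
  have h : u - c • w = 0 := hp0
  have := sub_eq_zero.mp h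
  exact this
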